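/- Let Λ be a 2×2 nonnegative matrix with spectral radius less than 1, and let nonnegative vector sequences (Φ_k), (Υ_k) in ℝ² satisfy Φ_k ≤ ΛΦ_{k−1} + Υ_{k−1} componentwise for all k ≥ 1. Then for any K, ∑_{k=0}^K Φ_k ≤ (I − Λ)^{−1}(Φ₀ + ∑_{k=0}^K Υ_k) componentwise. -/

import Mathlib

open Finset

/-- For a 2×2 entrywise-nonnegative matrix Λ with spectral radius < 1
(all eigenvalues of such Λ are real, so this is: every real eigenvalue has
|μ| < 1), and nonnegative sequences satisfying Φ_k ≤ ΛΦ_{k-1} + Υ_{k-1}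
componentwise, the partial sums satisfy
∑_{k=0}^K Φ_k ≤ (I - Λ)⁻¹(Φ₀ + ∑_{k=0}^K Υ_k) componentwise. -/
theorem stmt_9 (Λ : Matrix (Fin 2) (Fin 2) ℝ)
    (hΛ : ∀ i j, 0 ≤ Λ i j)
    (hρ : ∀ μ ∈ spectrum ℝ Λ, |μ| < 1)
    (Φ Υ : ℕ → Fin 2 → ℝ)
    (hΦ : ∀ k i, 0 ≤ Φ k i) (hΥ : ∀ k i, 0 ≤ Υ k i)
    (hrec : ∀ k, 1 ≤ k → ∀ i, Φ k i ≤ Λ.mulVec (Φ (k - 1)) i + Υ (k - 1) i) :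
    ∀ K, ∀ i, (∑ k ∈ range (K + 1), Φ k) i ≤
      ((1 - Λ)⁻¹).mulVec (Φ 0 + ∑ k ∈ range (K + 1), Υ k) i := by
  have ha := hΛ 0 0; have hb := hΛ 0 1; have hc := hΛ 1 0; have hd := hΛ 1 1
  set a := Λ 0 0 with ha'
  set b := Λ 0 1 with hb'
  set c := Λ 1 0 with hc'
  set d := Λ 1 1 with hd'
  set s := Real.sqrt ((a - d) ^ 2 + 4 * b * c) with hs'
  have hs0 : 0 ≤ s := Real.sqrt_nonneg _
  have hs2 : s ^ 2 = (a - d) ^ 2 + 4 * b * c := Real.sq_sqrt (by positivity)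
  set μ := (a + d + s) / 2 with hμ'
  have hμmem : μ ∈ spectrum ℝ Λ := by
    rw [spectrum.mem_iff, Matrix.isUnit_iff_isUnit_det, isUnit_iff_ne_zero, not_ne_iff,
      Matrix.det_fin_two]
    simp only [Matrix.sub_apply, Matrix.algebraMap_matrix_apply, if_pos rfl]
    norm_num
    nlinarith [hs2]
  have hμ1 : |μ| < 1 := hρ μ hμmem
  have hsad : a - d ≤ s := by nlinarith [hs2, hs0, mul_nonneg hb hc]
  have hsda : d - a ≤ s := by nlinarith [hs2, hs0, mul_nonneg hb hc]
  have hμa : a ≤ μ := by rw [hμ']; linarith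
  have hμd : d ≤ μ := by rw [hμ']; linarith
  have hμlt : μ < 1 := lt_of_le_of_lt (le_abs_self μ) hμ1
  have ha1 : a < 1 := lt_of_le_of_lt hμa hμlt
  have hd1 : d < 1 := lt_of_le_of_lt hμd hμlt
  have h2ad : s < 2 - a - d := by rw [hμ'] at hμlt; linarith
  have hΔ : 0 < (1 - a) * (1 - d) - b * c := by nlinarith [hs2, hs0, h2ad]
  set Δ := (1 - a) * (1 - d) - b * c with hΔ'
  have hΔne : Δ ≠ 0 := ne_of_gt hΔ
  set N : Matrix (Fin 2) (Fin 2) ℝ := Δ⁻¹ • !![1 - d, b; c, 1 - a] with hN'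
  have hNA : N * (1 - Λ) = 1 := by
    ext i j
    fin_cases i <;> fin_cases j <;>
      · simp [hN', Matrix.mul_apply, Fin.sum_univ_two, Matrix.sub_apply, Matrix.one_apply]
        field_simp
        ring
  have hinv : (1 - Λ)⁻¹ = N := Matrix.inv_eq_left_inv hNA
  have hΔinv : (0:ℝ) ≤ Δ⁻¹ := inv_nonneg.mpr hΔ.le
  have hNnn : ∀ i j, 0 ≤ N i j := by
    intro i j
    fin_cases i <;> fin_cases j <;>
      · simp [hN']
        exact mul_nonneg hΔinv (by linarith)
  have hmono : ∀ (M : Matrix (Fin 2) (Fin 2) ℝ), (∀ i j, 0 ≤ M i j) →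
      ∀ u v : Fin 2 → ℝ, (∀ j, u j ≤ v j) → ∀ i, M.mulVec u i ≤ M.mulVec v i := by
    intro M hM u v huv i
    simp only [Matrix.mulVec, dotProduct]
    exact Finset.sum_le_sum fun j _ => mul_le_mul_of_nonneg_left (huv j) (hM i j)
  intro K
  set S : Fin 2 → ℝ := ∑ k ∈ range (K + 1), Φ k with hS'
  have h1 : ∀ i, S i ≤ Λ.mulVec S i + Φ 0 i + ∑ k ∈ range (K + 1), Υ k i := by
    intro i
    have hSi : S i = ∑ k ∈ range K, Φ (k + 1) i + Φ 0 i := by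
      rw [hS', Finset.sum_apply, Finset.sum_range_succ']
    have h2 : ∑ k ∈ range K, Φ (k + 1) i ≤
        ∑ k ∈ range K, (Λ.mulVec (Φ k) i + Υ k i) := by
      refine Finset.sum_le_sum fun k _ => ?_
      have := hrec (k + 1) (by omega) i
      simpa using this
    have hlin : ∑ k ∈ range K, Λ.mulVec (Φ k) i
        = Λ.mulVec (∑ k ∈ range K, Φ k) i := by
      simp only [Matrix.mulVec, dotProduct, Finset.sum_apply, Finset.mul_sum]
      rw [Finset.sum_comm]
    have hmono2 : Λ.mulVec (∑ k ∈ range K, Φ k) i ≤ Λ.mulVec S i := by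
      refine hmono Λ hΛ _ _ (fun j => ?_) i
      rw [hS', Finset.sum_apply, Finset.sum_apply, Finset.sum_range_succ]
      have := hΦ K j
      linarith
    have hups : ∑ k ∈ range K, Υ k i ≤ ∑ k ∈ range (K + 1), Υ k i := by
      rw [Finset.sum_range_succ]
      have := hΥ K i
      linarith
    rw [Finset.sum_add_distrib, hlin] at h2
    linarith [hSi, h2, hmono2, hups]
  have hkey : ∀ i, (1 - Λ).mulVec S i ≤ (Φ 0 + ∑ k ∈ range (K + 1), Υ k) i := by
    intro i
    rw [Matrix.sub_mulVec, Matrix.one_mulVec, Pi.sub_apply, Pi.add_apply,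
      Finset.sum_apply]
    have := h1 i
    linarith
  intro i
  have h3 : N.mulVec ((1 - Λ).mulVec S) = S := by
    rw [Matrix.mulVec_mulVec, hNA, Matrix.one_mulVec]
  rw [hinv]
  calc S i = N.mulVec ((1 - Λ).mulVec S) i := by rw [h3]
    _ ≤ N.mulVec (Φ 0 + ∑ k ∈ range (K + 1), Υ k) i := hmono N hNnn _ _ hkey i
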